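/- Let A = (Q, Σ, Δ, Q₀, F) be an NBA with Q₀ ≠ ∅, let B be a TDPA obtained from the unified construction for A, and let w : ℕ → Σ. If w ∈ L(B) then w ∈ L(A). -/

import Mathlib

/-! Core definitions: NBA, TDPA, ranked slices, and the unified
determinization construction. -/

universe u v

/-- A nondeterministic Büchi automaton over state type `Q` and alphabet `Alp`. -/
structure NBA (Q : Type u) (Alp : Type v) where
  delta : Q → Alp → Set Q
  Q0 : Set Q
  F : Set Q

namespace NBA

variable {Q : Type u} {Alp : Type v}

/-- `Δ(X, x)`: successors of a set of states. -/
def nextSet (A : NBA Q Alp) (X : Set Q) (x : Alp) : Set Q := ⋃ q ∈ X, A.delta q x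

/-- A run of the NBA on the word `w`. -/
def IsRun (A : NBA Q Alp) (w : ℕ → Alp) (q : ℕ → Q) : Prop :=
  q 0 ∈ A.Q0 ∧ ∀ i, q (i + 1) ∈ A.delta (q i) (w i)

/-- Acceptance: some run visits `F` infinitely often. -/
def Accepts (A : NBA Q Alp) (w : ℕ → Alp) : Prop :=
  ∃ q, A.IsRun w q ∧ ∀ N, ∃ i, N ≤ i ∧ q i ∈ A.F

end NBA

/-- A transition-based deterministic parity automaton. -/
structure TDPA (P : Type u) (Alp : Type v) where
  delta : P → Alp → P
  p0 : P
  c : P → Alp → ℕ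

namespace TDPA

variable {P : Type u} {Alp : Type v}

/-- The unique run of the TDPA on `w`. -/
def run (B : TDPA P Alp) (w : ℕ → Alp) : ℕ → P
  | 0 => B.p0
  | i + 1 => B.delta (B.run w i) (w i)

/-- Acceptance: the minimum priority occurring infinitely often on the run is even. -/
def Accepts (B : TDPA P Alp) (w : ℕ → Alp) : Prop :=
  ∃ m, (∀ N, ∃ i, N ≤ i ∧ B.c (B.run w i) (w i) = m) ∧
    (∀ m', (∀ N, ∃ i, N ≤ i ∧ B.c (B.run w i) (w i) = m') → m ≤ m') ∧ Even m

/-- Reachability from the initial state. -/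
def Reachable (B : TDPA P Alp) (p : P) : Prop :=
  ∃ l : List Alp, l.foldl B.delta B.p0 = p

end TDPA

/-- A (ranked) slice: a tuple `S 1, …, S n` of subsets of `Q` together with a
ranking function `rk`.  Only the values on `{1, …, n}` are relevant. -/
structure Slice (Q : Type u) where
  n : ℕ
  S : ℕ → Set Q
  rk : ℕ → ℕ

namespace Slice

variable {Q : Type u}

/-- A valid ranked slice: the sets are nonempty and pairwise disjoint, the ranking is a
bijection of `{1,…,n}` and the last set has rank `1`. -/
def Valid (s : Slice Q) : Prop :=
  (∀ i ∈ Set.Icc 1 s.n, (s.S i).Nonempty) ∧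
  (∀ i ∈ Set.Icc 1 s.n, ∀ j ∈ Set.Icc 1 s.n, i ≠ j → Disjoint (s.S i) (s.S j)) ∧
  Set.BijOn s.rk (Set.Icc 1 s.n) (Set.Icc 1 s.n) ∧
  (1 ≤ s.n → s.rk s.n = 1)

/-- `Q_t`: union of all sets of the slice. -/
def states (s : Slice Q) : Set Q := ⋃ i ∈ Set.Icc 1 s.n, s.S i

/-- `idx q`: the (unique) index of the set containing `q`. -/
noncomputable def idx (s : Slice Q) (q : Q) : ℕ :=
  sInf {i | 1 ≤ i ∧ i ≤ s.n ∧ q ∈ s.S i}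

end Slice

variable {Q : Type u} {Alp : Type v}

/-- `Δ_t(q, x)`: successors of `q` not reachable from a set strictly to the left. -/
noncomputable def dT (A : NBA Q Alp) (s : Slice Q) (q : Q) (x : Alp) : Set Q :=
  A.delta q x \ A.nextSet (⋃ i ∈ Set.Ico 1 (s.idx q), s.S i) x

/-- `Δ_t(X, x)` for a set `X`. -/
noncomputable def dTs (A : NBA Q Alp) (s : Slice Q) (X : Set Q) (x : Alp) : Set Q :=
  ⋃ q ∈ X, dT A s q x

/-- The sets `Ŝ_j` of the step stage: odd positions are left (accepting) children, even
positions right (non-accepting) children. -/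
noncomputable def hatS (A : NBA Q Alp) (s : Slice Q) (x : Alp) (j : ℕ) : Set Q :=
  if j % 2 = 1 then dTs A s (s.S ((j + 1) / 2)) x ∩ A.F
  else dTs A s (s.S (j / 2)) x \ A.F

/-- The ranking `α̂` of the step stage. -/
def hatRk (s : Slice Q) (j : ℕ) : ℕ :=
  if j % 2 = 1 then s.n + 1 else s.rk (j / 2)

/-- The prune stage: `xs 1 < … < xs nt` enumerates the indices of the nonempty sets
among `Ŝ_1, …, Ŝ_{2n}`, and `xs (nt+1) = 2n + 1`. -/
def IsPrune (A : NBA Q Alp) (s : Slice Q) (x : Alp) (nt : ℕ) (xs : ℕ → ℕ) : Prop :=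
  StrictMonoOn xs (Set.Icc 1 nt) ∧
  (∀ i ∈ Set.Icc 1 nt, xs i ∈ Set.Icc 1 (2 * s.n) ∧ (hatS A s x (xs i)).Nonempty) ∧
  (∀ j ∈ Set.Icc 1 (2 * s.n), (hatS A s x j).Nonempty → ∃ i ∈ Set.Icc 1 nt, xs i = j) ∧
  xs (nt + 1) = 2 * s.n + 1

/-- The ranking `α̃` after prune: `α̃ i = min {α̂ j | xs i ≤ j < xs (i+1)}`. -/
noncomputable def tildeRk (s : Slice Q) (xs : ℕ → ℕ) (i : ℕ) : ℕ :=
  sInf (hatRk s '' {j | xs i ≤ j ∧ j < xs (i + 1)})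

/-- The green ranks: ranks in the image of `α̃` that mark an empty set after step. -/
def greenSet (A : NBA Q Alp) (s : Slice Q) (x : Alp) (nt : ℕ) (xs : ℕ → ℕ) : Set ℕ :=
  {r | (∃ i ∈ Set.Icc 1 nt, tildeRk s xs i = r) ∧
    ∃ j ∈ Set.Icc 1 (2 * s.n), hatS A s x j = ∅ ∧ hatRk s j = r}

/-- The red ranks: ranks in the image of `α̂` but not of `α̃`. -/
def redSet (s : Slice Q) (nt : ℕ) (xs : ℕ → ℕ) : Set ℕ :=
  {r | (∃ j ∈ Set.Icc 1 (2 * s.n), hatRk s j = r) ∧ ¬ ∃ i ∈ Set.Icc 1 nt, tildeRk s xs i = r}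

open Classical in
/-- The dominating rank: the minimum of the active ranks `G ∪ R`, or `|Q| + 1` if there
is no active rank. -/
noncomputable def domRank (G R : Set ℕ) (card : ℕ) : ℕ :=
  if (G ∪ R).Nonempty then sInf (G ∪ R) else card + 1

/-- A partition of `{1,…,nt}` into consecutive intervals, described by its boundaries:
the `j`-th interval is `Icc (b (j-1) + 1) (b j)`. -/
def IsIntervalPartition (nt n' : ℕ) (b : ℕ → ℕ) : Prop :=
  b 0 = 0 ∧ b n' = nt ∧ StrictMonoOn b (Set.Icc 0 n')

/-- The merge constraints: intervals containing a rank `< k` are singletons, and an index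
carrying rank `k` is the maximum of its interval. -/
def MergeConstraints (n' : ℕ) (b : ℕ → ℕ) (aT : ℕ → ℕ) (k : ℕ) : Prop :=
  ∀ j ∈ Set.Icc 1 n', ∀ l ∈ Set.Icc (b (j - 1) + 1) (b j),
    (aT l < k → b j = b (j - 1) + 1) ∧ (aT l = k → l = b j)

/-- A full transition of the (unified) construction, via prune data `(nt, xs)` and the
merge partition `(n', b)`. -/
noncomputable def TransVia [Fintype Q] (A : NBA Q Alp) (s : Slice Q) (x : Alp)
    (s' : Slice Q) (pr : ℕ) (nt : ℕ) (xs : ℕ → ℕ) (n' : ℕ) (b : ℕ → ℕ) : Prop :=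
  IsPrune A s x nt xs ∧
  IsIntervalPartition nt n' b ∧
  MergeConstraints n' b (tildeRk s xs)
    (domRank (greenSet A s x nt xs) (redSet s nt xs) (Fintype.card Q)) ∧
  ((domRank (greenSet A s x nt xs) (redSet s nt xs) (Fintype.card Q) ∈ greenSet A s x nt xs ∧
      pr = 2 * domRank (greenSet A s x nt xs) (redSet s nt xs) (Fintype.card Q)) ∨
   (domRank (greenSet A s x nt xs) (redSet s nt xs) (Fintype.card Q) ∉ greenSet A s x nt xs ∧
      pr = 2 * domRank (greenSet A s x nt xs) (redSet s nt xs) (Fintype.card Q) - 1)) ∧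
  s'.n = n' ∧
  (∀ i ∈ Set.Icc 1 n', s'.S i = ⋃ j ∈ Set.Icc (b (i - 1) + 1) (b i), hatS A s x (xs j)) ∧
  s'.Valid ∧
  (∀ i ∈ Set.Icc 1 n', ∀ j ∈ Set.Icc 1 n',
    sInf (tildeRk s xs '' Set.Icc (b (i - 1) + 1) (b i)) <
      sInf (tildeRk s xs '' Set.Icc (b (j - 1) + 1) (b j)) → s'.rk i < s'.rk j)

/-- A transition of the unified construction (any valid merge partition). -/
noncomputable def UnifiedTrans [Fintype Q] (A : NBA Q Alp) (s : Slice Q) (x : Alp)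
    (s' : Slice Q) (pr : ℕ) : Prop :=
  ∃ nt xs n' b, TransVia A s x s' pr nt xs n' b

/-- A transition of the Muller-Schupp construction (merge partition into singletons). -/
noncomputable def MSTrans [Fintype Q] (A : NBA Q Alp) (s : Slice Q) (x : Alp)
    (s' : Slice Q) (pr : ℕ) : Prop :=
  ∃ nt xs, TransVia A s x s' pr nt xs nt id

/-- `B` is obtained from the unified construction for `A`. -/
noncomputable def ObtainedUnified [Fintype Q] (A : NBA Q Alp) (B : TDPA (Slice Q) Alp) : Prop :=
  B.p0.n = 1 ∧ B.p0.S 1 = A.Q0 ∧ B.p0.rk 1 = 1 ∧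
  ∀ p, B.Reachable p → ∀ x, UnifiedTrans A p x (B.delta p x) (B.c p x)

/-- `B` is obtained from the Muller-Schupp construction for `A`. -/
noncomputable def ObtainedMS [Fintype Q] (A : NBA Q Alp) (B : TDPA (Slice Q) Alp) : Prop :=
  B.p0.n = 1 ∧ B.p0.S 1 = A.Q0 ∧ B.p0.rk 1 = 1 ∧
  ∀ p, B.Reachable p → ∀ x, MSTrans A p x (B.delta p x) (B.c p x)


/-! ### Auxiliary development for the proof of `dpa_to_nba` -/

section DPAtoNBAProof

open Classical

variable {Q Alp : Type u}

lemma Slice.idx_eq {s : Slice Q} (hs : s.Valid) {q : Q} {i : ℕ}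
    (hi : i ∈ Set.Icc 1 s.n) (hq : q ∈ s.S i) : s.idx q = i := by
  have hset : {i' | 1 ≤ i' ∧ i' ≤ s.n ∧ q ∈ s.S i'} = {i} := by
    ext i'
    simp only [Set.mem_setOf_eq, Set.mem_singleton_iff]
    constructor
    · rintro ⟨h1, h2, h3⟩
      by_contra hne
      exact Set.disjoint_left.1 (hs.2.1 i' ⟨h1, h2⟩ i hi hne) h3 hq
    · rintro rfl
      exact ⟨hi.1, hi.2, hq⟩
  rw [Slice.idx, hset]
  simp

lemma Slice.mem_states_of_mem {s : Slice Q} {q : Q} {i : ℕ}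
    (hi : i ∈ Set.Icc 1 s.n) (hq : q ∈ s.S i) : q ∈ s.states :=
  Set.mem_biUnion hi hq

end DPAtoNBAProof


section Counting

/-- Injection counting: if values `1,…,k-1` are attained and `k` is attained at `i₀`,
then `k ≤ n'`. -/
lemma rank_count_le {n' k : ℕ} (f : ℕ → ℕ) (i₀ : ℕ) (hi₀ : i₀ ∈ Set.Icc 1 n')
    (hf0 : f i₀ = k) (hk : 1 ≤ k)
    (hlowex : ∀ v, 1 ≤ v → v < k → ∃ i ∈ Set.Icc 1 n', f i = v) : k ≤ n' := by
  classical
  have hex : ∀ v : ℕ, ∃ i : ℕ, v ∈ Finset.Icc 1 k → i ∈ Finset.Icc 1 n' ∧ f i = v := by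
    intro v
    by_cases hv : v ∈ Finset.Icc 1 k
    · rw [Finset.mem_Icc] at hv
      rcases eq_or_lt_of_le hv.2 with h | h
      · exact ⟨i₀, fun _ => ⟨by rw [Finset.mem_Icc]; exact Set.mem_Icc.1 hi₀, h ▸ hf0⟩⟩
      · obtain ⟨i, hi, hfi⟩ := hlowex v hv.1 h
        exact ⟨i, fun _ => ⟨by rw [Finset.mem_Icc]; exact Set.mem_Icc.1 hi, hfi⟩⟩
    · exact ⟨0, fun h => absurd h hv⟩
  choose φ hφ using hex
  have hcard := Finset.card_le_card_of_injOn φ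
    (fun v hv => (hφ v hv).1)
    (by
      intro a ha b hb hab
      have h1 := (hφ a ha).2
      have h2 := (hφ b hb).2
      rw [hab] at h1
      rw [h1] at h2
      exact h2)
  simpa using hcard

/-- The counting lemma for the normalisation step: if the values `1, …, k-1` are each
attained exactly once, `k` is attained exactly at `i₀`, and `g` is an order-preserving
bijection of `{1,…,n'}` (w.r.t. `f`), then `g i₀ = k`. -/
lemma rank_count {n' k : ℕ} (f g : ℕ → ℕ)
    (hbij : Set.BijOn g (Set.Icc 1 n') (Set.Icc 1 n'))
    (hord : ∀ i ∈ Set.Icc 1 n', ∀ j ∈ Set.Icc 1 n', f i < f j → g i < g j)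
    (i₀ : ℕ) (hi₀ : i₀ ∈ Set.Icc 1 n') (hf0 : f i₀ = k) (hk : 1 ≤ k)
    (hlowex : ∀ v, 1 ≤ v → v < k → ∃ i ∈ Set.Icc 1 n', f i = v)
    (huniq : ∀ v, v ≤ k → ∀ i ∈ Set.Icc 1 n', ∀ j ∈ Set.Icc 1 n',
      f i = v → f j = v → i = j)
    (hfpos : ∀ i ∈ Set.Icc 1 n', 1 ≤ f i) :
    g i₀ = k := by
  classical
  set L : Finset ℕ := (Finset.Icc 1 n').filter (fun i => f i < k) with hL
  set H : Finset ℕ := (Finset.Icc 1 n').filter (fun i => k < f i) with hH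
  have hmemL : ∀ i ∈ L, i ∈ Set.Icc 1 n' ∧ f i < k := by
    intro i hi
    rw [hL, Finset.mem_filter, Finset.mem_Icc] at hi
    exact ⟨Set.mem_Icc.2 hi.1, hi.2⟩
  have hmemH : ∀ i ∈ H, i ∈ Set.Icc 1 n' ∧ k < f i := by
    intro i hi
    rw [hH, Finset.mem_filter, Finset.mem_Icc] at hi
    exact ⟨Set.mem_Icc.2 hi.1, hi.2⟩
  -- card L = k - 1
  have hcardL : L.card = k - 1 := by
    rw [show k - 1 = (Finset.Icc 1 (k - 1)).card by rw [Nat.card_Icc]; omega]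
    apply Finset.card_bij (fun i _ => f i)
    · intro i hi
      obtain ⟨hi1, hi2⟩ := hmemL i hi
      rw [Finset.mem_Icc]
      exact ⟨hfpos i hi1, by omega⟩
    · intro a ha b hb hab
      obtain ⟨ha1, ha2⟩ := hmemL a ha
      obtain ⟨hb1, hb2⟩ := hmemL b hb
      exact huniq (f a) (by omega) a ha1 b hb1 rfl hab.symm
    · intro v hv
      rw [Finset.mem_Icc] at hv
      obtain ⟨i, hi, hfi⟩ := hlowex v hv.1 (by omega)
      refine ⟨i, ?_, hfi⟩
      rw [hL, Finset.mem_filter, Finset.mem_Icc]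
      exact ⟨Set.mem_Icc.1 hi, by omega⟩
  -- partition: card H = n' - 1 - (k-1)
  have hpart : ∀ i ∈ Finset.Icc 1 n', i ∈ L ∨ i = i₀ ∨ i ∈ H := by
    intro i hi
    rw [Finset.mem_Icc] at hi
    rcases lt_trichotomy (f i) k with h | h | h
    · left; rw [hL, Finset.mem_filter, Finset.mem_Icc]; exact ⟨hi, h⟩
    · right; left
      exact huniq k (le_refl _) i (Set.mem_Icc.2 hi) i₀ hi₀ h hf0
    · right; right; rw [hH, Finset.mem_filter, Finset.mem_Icc]; exact ⟨hi, h⟩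
  have hLi₀ : i₀ ∉ L := by
    intro h
    have := (hmemL i₀ h).2
    omega
  have hHi₀ : i₀ ∉ H := by
    intro h
    have := (hmemH i₀ h).2
    omega
  have hLH : ∀ i, i ∈ L → i ∈ H → False := by
    intro i h1 h2
    have := (hmemL i h1).2
    have := (hmemH i h2).2
    omega
  have hcover : Finset.Icc 1 n' = L ∪ {i₀} ∪ H := by
    apply Finset.Subset.antisymm
    · intro i hi
      rcases hpart i hi with h | h | h
      · exact Finset.mem_union_left _ (Finset.mem_union_left _ h)
      · exact Finset.mem_union_left _ (Finset.mem_union_right _ (by simp [h]))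
      · exact Finset.mem_union_right _ h
    · intro i hi
      rw [Finset.mem_union, Finset.mem_union] at hi
      rcases hi with (h | h) | h
      · exact Finset.mem_Icc.2 (Set.mem_Icc.1 (hmemL i h).1)
      · rw [Finset.mem_singleton] at h
        subst h
        exact Finset.mem_Icc.2 (Set.mem_Icc.1 hi₀)
      · exact Finset.mem_Icc.2 (Set.mem_Icc.1 (hmemH i h).1)
  have hcardIcc : (Finset.Icc 1 n').card = n' := by
    rw [Nat.card_Icc]; omega
  have hcardH : H.card = n' - k := by
    have hdisj1 : Disjoint (L ∪ {i₀}) H := by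
      rw [Finset.disjoint_left]
      intro i hi hiH
      rw [Finset.mem_union, Finset.mem_singleton] at hi
      rcases hi with h | h
      · exact hLH i h hiH
      · subst h; exact hHi₀ hiH
    have hdisj2 : Disjoint L ({i₀} : Finset ℕ) := by
      rw [Finset.disjoint_left]
      intro i hi hi2
      rw [Finset.mem_singleton] at hi2
      subst hi2
      exact hLi₀ hi
    have h1 : (L ∪ {i₀} ∪ H).card = L.card + 1 + H.card := by
      rw [Finset.card_union_of_disjoint hdisj1, Finset.card_union_of_disjoint hdisj2]
      simp
    rw [← hcover, hcardIcc] at h1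
    omega
  -- g-images
  have hgL : ∀ i ∈ L, g i < g i₀ := fun i hi =>
    hord i (hmemL i hi).1 i₀ hi₀ (by rw [hf0]; exact (hmemL i hi).2)
  have hgH : ∀ i ∈ H, g i₀ < g i := fun i hi =>
    hord i₀ hi₀ i (hmemH i hi).1 (by rw [hf0]; exact (hmemH i hi).2)
  have hginj : Set.InjOn g (Set.Icc 1 n') := hbij.2.1
  have hg0 : g i₀ ∈ Set.Icc 1 n' := hbij.1 hi₀
  -- card bound from L
  have hcard1 : L.card ≤ g i₀ - 1 := by
    have := Finset.card_le_card_of_injOn (s := L) (t := Finset.Icc 1 (g i₀ - 1)) g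
      (by
        intro i hi
        rw [Finset.coe_Icc, Set.mem_Icc]
        have h1 := hgL i hi
        have h2 : g i ∈ Set.Icc 1 n' := hbij.1 (hmemL i hi).1
        have := Set.mem_Icc.1 h2
        omega)
      (by
        intro a ha b hb hab
        exact hginj (hmemL a (Finset.mem_coe.1 ha)).1 (hmemL b (Finset.mem_coe.1 hb)).1 hab)
    rw [Nat.card_Icc] at this
    omega
  have hcard2 : H.card ≤ n' - g i₀ := by
    have := Finset.card_le_card_of_injOn (s := H) (t := Finset.Icc (g i₀ + 1) n') g
      (by
        intro i hi
        rw [Finset.coe_Icc, Set.mem_Icc]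
        have h1 := hgH i hi
        have h2 : g i ∈ Set.Icc 1 n' := hbij.1 (hmemH i hi).1
        have := Set.mem_Icc.1 h2
        omega)
      (by
        intro a ha b hb hab
        exact hginj (hmemH a (Finset.mem_coe.1 ha)).1 (hmemH b (Finset.mem_coe.1 hb)).1 hab)
    rw [Nat.card_Icc] at this
    omega
  have := Set.mem_Icc.1 hg0
  omega

end Counting

section DPAtoNBACtx

open Classical

/-- A bundled context for the proof of `dpa_to_nba`. -/
structure DCtx (Q Alp : Type) [Fintype Q] where
  A : NBA Q Alp
  B : TDPA (Slice Q) Alp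
  w : ℕ → Alp
  k : ℕ
  hQ0 : A.Q0.Nonempty
  hB : ObtainedUnified A B
  hgr : ∀ n, ∃ t, n ≤ t ∧ B.c (B.run w t) (w t) = 2 * k
  N0 : ℕ
  hN0 : ∀ t, N0 ≤ t → 2 * k ≤ B.c (B.run w t) (w t)

namespace DCtx

variable {Q Alp : Type} [Fintype Q] (c : DCtx Q Alp)

/-- The slice at time `t` along the run. -/
noncomputable def sl (t : ℕ) : Slice Q := c.B.run c.w t

/-- The priority emitted at time `t`. -/
noncomputable def pr (t : ℕ) : ℕ := c.B.c (c.sl t) (c.w t)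

lemma sl_succ (t : ℕ) : c.sl (t + 1) = c.B.delta (c.sl t) (c.w t) := rfl

lemma reach (t : ℕ) : c.B.Reachable (c.sl t) := by
  induction t with
  | zero => exact ⟨[], rfl⟩
  | succ t ih =>
    obtain ⟨l, hl⟩ := ih
    exact ⟨l ++ [c.w t], by simp [List.foldl_append, hl]; rfl⟩

lemma trans (t : ℕ) :
    UnifiedTrans c.A (c.sl t) (c.w t) (c.sl (t + 1)) (c.pr t) :=
  c.hB.2.2.2 _ (c.reach t) _

noncomputable def nt (t : ℕ) : ℕ := (c.trans t).choose
noncomputable def xs (t : ℕ) : ℕ → ℕ := (c.trans t).choose_spec.choose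
noncomputable def nn (t : ℕ) : ℕ := (c.trans t).choose_spec.choose_spec.choose
noncomputable def bb (t : ℕ) : ℕ → ℕ :=
  (c.trans t).choose_spec.choose_spec.choose_spec.choose

lemma TV (t : ℕ) :
    TransVia c.A (c.sl t) (c.w t) (c.sl (t + 1)) (c.pr t) (c.nt t) (c.xs t) (c.nn t) (c.bb t) :=
  (c.trans t).choose_spec.choose_spec.choose_spec.choose_spec

/-- Dominating rank at step `t`. -/
noncomputable def dom (t : ℕ) : ℕ :=
  domRank (greenSet c.A (c.sl t) (c.w t) (c.nt t) (c.xs t))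
    (redSet (c.sl t) (c.nt t) (c.xs t)) (Fintype.card Q)

lemma hPrune (t : ℕ) : IsPrune c.A (c.sl t) (c.w t) (c.nt t) (c.xs t) := (c.TV t).1
lemma hPart (t : ℕ) : IsIntervalPartition (c.nt t) (c.nn t) (c.bb t) := (c.TV t).2.1
lemma hMC (t : ℕ) :
    MergeConstraints (c.nn t) (c.bb t) (tildeRk (c.sl t) (c.xs t)) (c.dom t) := (c.TV t).2.2.1
lemma hPrio (t : ℕ) :
    (c.dom t ∈ greenSet c.A (c.sl t) (c.w t) (c.nt t) (c.xs t) ∧ c.pr t = 2 * c.dom t) ∨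
    (c.dom t ∉ greenSet c.A (c.sl t) (c.w t) (c.nt t) (c.xs t) ∧
      c.pr t = 2 * c.dom t - 1) := (c.TV t).2.2.2.1
lemma hn (t : ℕ) : (c.sl (t + 1)).n = c.nn t := (c.TV t).2.2.2.2.1
lemma hS (t : ℕ) : ∀ i ∈ Set.Icc 1 (c.nn t),
    (c.sl (t + 1)).S i = ⋃ j ∈ Set.Icc (c.bb t (i - 1) + 1) (c.bb t i),
      hatS c.A (c.sl t) (c.w t) (c.xs t j) := (c.TV t).2.2.2.2.2.1
lemma hValid' (t : ℕ) : (c.sl (t + 1)).Valid := (c.TV t).2.2.2.2.2.2.1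
lemma hOrd (t : ℕ) : ∀ i ∈ Set.Icc 1 (c.nn t), ∀ j ∈ Set.Icc 1 (c.nn t),
    sInf (tildeRk (c.sl t) (c.xs t) '' Set.Icc (c.bb t (i - 1) + 1) (c.bb t i)) <
      sInf (tildeRk (c.sl t) (c.xs t) '' Set.Icc (c.bb t (j - 1) + 1) (c.bb t j)) →
    (c.sl (t + 1)).rk i < (c.sl (t + 1)).rk j := (c.TV t).2.2.2.2.2.2.2

lemma valid (t : ℕ) : (c.sl t).Valid := by
  cases t with
  | zero =>
    have h0 : c.sl 0 = c.B.p0 := rfl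
    rw [h0]
    refine ⟨?_, ?_, ?_, ?_⟩
    · intro i hi
      rw [c.hB.1, Set.Icc_self, Set.mem_singleton_iff] at hi
      subst hi
      rw [c.hB.2.1]
      exact c.hQ0
    · intro i hi j hj hne
      rw [c.hB.1, Set.Icc_self, Set.mem_singleton_iff] at hi hj
      exact absurd (hi.trans hj.symm) hne
    · rw [c.hB.1, Set.Icc_self]
      have h1 : c.B.p0.rk 1 = 1 := c.hB.2.2.1
      constructor
      · intro a ha
        rw [Set.mem_singleton_iff] at ha; subst ha
        simp [h1]
      constructor
      · intro a ha b hb _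
        rw [Set.mem_singleton_iff] at ha hb
        rw [ha, hb]
      · intro a ha
        rw [Set.mem_singleton_iff] at ha; subst ha
        exact ⟨1, rfl, h1⟩
    · intro h
      rw [c.hB.1]
      exact c.hB.2.2.1
  | succ t => exact c.hValid' t

lemma dom_pos (t : ℕ) : 1 ≤ c.dom t := by
  unfold dom domRank
  split
  · rcases Nat.eq_zero_or_pos (sInf (greenSet c.A (c.sl t) (c.w t) (c.nt t) (c.xs t) ∪
      redSet (c.sl t) (c.nt t) (c.xs t))) with h0 | h1
    · exfalso
      rename_i hne
      have hmem := Nat.sInf_mem hne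
      rw [h0] at hmem
      have hwit : ∃ j ∈ Set.Icc 1 (2 * (c.sl t).n), hatRk (c.sl t) j = 0 := by
        rcases hmem with hG | hR
        · obtain ⟨_, j, hj, _, hrk⟩ := hG
          exact ⟨j, hj, hrk⟩
        · obtain ⟨⟨j, hj, hrk⟩, _⟩ := hR
          exact ⟨j, hj, hrk⟩
      obtain ⟨j, hj, hrk⟩ := hwit
      obtain ⟨hj1, hj2⟩ := hj
      unfold hatRk at hrk
      by_cases hpar : j % 2 = 1
      · rw [if_pos hpar] at hrk
        omega
      · rw [if_neg hpar] at hrk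
        have hmem2 : j / 2 ∈ Set.Icc 1 (c.sl t).n := ⟨by omega, by omega⟩
        have := ((c.valid t).2.2.1.1 hmem2).1
        omega
    · exact h1
  · omega

lemma pr_pos (t : ℕ) : 1 ≤ c.pr t := by
  have h1 := c.dom_pos t
  rcases c.hPrio t with ⟨_, hp⟩ | ⟨_, hp⟩ <;> omega

lemma hk : 1 ≤ c.k := by
  obtain ⟨t, _, hpr⟩ := c.hgr 0
  have h1 : 1 ≤ c.pr t := c.pr_pos t
  have h2 : c.pr t = 2 * c.k := hpr
  omega

/-! #### Prune and window API -/

/-- Hat sets at time `t`. -/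
noncomputable def hts (t j : ℕ) : Set Q := hatS c.A (c.sl t) (c.w t) j
/-- Hat ranks at time `t`. -/
noncomputable def htr (t j : ℕ) : ℕ := hatRk (c.sl t) j
/-- Pruned ranks at time `t`. -/
noncomputable def tr (t l : ℕ) : ℕ := tildeRk (c.sl t) (c.xs t) l

/-- The window of prune index `l`. -/
def win (t l : ℕ) : Set ℕ := {j | c.xs t l ≤ j ∧ j < c.xs t (l + 1)}

lemma tr_def (t l : ℕ) : c.tr t l = sInf (c.htr t '' c.win t l) := rfl

lemma xs_lt_succ (t : ℕ) {l : ℕ} (hl : l ∈ Set.Icc 1 (c.nt t)) :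
    c.xs t l < c.xs t (l + 1) := by
  rcases eq_or_lt_of_le hl.2 with h | h
  · have h4 := (c.hPrune t).2.2.2
    have h2 := ((c.hPrune t).2.1 l hl).1.2
    rw [h] at h2 ⊢
    rw [h4]
    omega
  · exact (c.hPrune t).1 hl ⟨le_trans hl.1 (by omega), by omega⟩ (by omega)

lemma xs_mem_window (t : ℕ) {l : ℕ} (hl : l ∈ Set.Icc 1 (c.nt t)) :
    c.xs t l ∈ c.win t l := ⟨le_refl _, c.xs_lt_succ t hl⟩

lemma window_subset (t : ℕ) {l j : ℕ} (hl : l ∈ Set.Icc 1 (c.nt t)) (hj : j ∈ c.win t l) :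
    j ∈ Set.Icc 1 (2 * (c.sl t).n) := by
  have h1 := ((c.hPrune t).2.1 l hl).1.1
  constructor
  · exact le_trans h1 hj.1
  · rcases eq_or_lt_of_le hl.2 with h | h
    · have h4 := (c.hPrune t).2.2.2
      have := hj.2
      rw [h, h4] at this
      omega
    · have h2 := ((c.hPrune t).2.1 (l + 1) ⟨by omega, by omega⟩).1.2
      have := hj.2
      omega

lemma window_mono (t : ℕ) {l l' j : ℕ} (hl : l ∈ Set.Icc 1 (c.nt t))
    (hl' : l' ∈ Set.Icc 1 (c.nt t)) (hll : l < l') (hj : j ∈ c.win t l) :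
    j < c.xs t l' := by
  have hmono := ((c.hPrune t).1).monotoneOn
  obtain ⟨hl1, hl2⟩ := hl
  obtain ⟨hl1', hl2'⟩ := hl'
  have hle : c.xs t (l + 1) ≤ c.xs t l' := by
    rcases eq_or_lt_of_le (show l + 1 ≤ l' by omega) with h | h
    · rw [h]
    · exact hmono ⟨by omega, by omega⟩ ⟨hl1', hl2'⟩ (by omega)
  exact lt_of_lt_of_le hj.2 hle

lemma window_unique (t : ℕ) {l l' j : ℕ} (hl : l ∈ Set.Icc 1 (c.nt t))
    (hl' : l' ∈ Set.Icc 1 (c.nt t)) (hj : j ∈ c.win t l) (hj' : j ∈ c.win t l') :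
    l = l' := by
  rcases lt_trichotomy l l' with h | h | h
  · exact absurd (c.window_mono t hl hl' h hj) (not_lt.2 hj'.1)
  · exact h
  · exact absurd (c.window_mono t hl' hl h hj') (not_lt.2 hj.1)

lemma tr_mem (t : ℕ) {l : ℕ} (hl : l ∈ Set.Icc 1 (c.nt t)) :
    c.tr t l ∈ c.htr t '' c.win t l := by
  apply Nat.sInf_mem
  exact ⟨_, Set.mem_image_of_mem _ (c.xs_mem_window t hl)⟩

lemma tr_le (t : ℕ) {l j : ℕ} (hj : j ∈ c.win t l) : c.tr t l ≤ c.htr t j :=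
  Nat.sInf_le (Set.mem_image_of_mem _ hj)

lemma xs_exists_of_nonempty (t : ℕ) {j : ℕ} (hj : j ∈ Set.Icc 1 (2 * (c.sl t).n))
    (hne : (c.hts t j).Nonempty) : ∃ l ∈ Set.Icc 1 (c.nt t), c.xs t l = j :=
  (c.hPrune t).2.2.1 j hj hne

/-! #### Parity and parent API for hat sets -/

/-- Parent index of hat position `j`. -/
def PI (j : ℕ) : ℕ := (j + 1) / 2

lemma PI_mem {n j : ℕ} (hj : j ∈ Set.Icc 1 (2 * n)) : PI j ∈ Set.Icc 1 n := by
  obtain ⟨h1, h2⟩ := hj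
  exact ⟨by unfold PI; omega, by unfold PI; omega⟩

lemma hts_subset_dTs (t : ℕ) (j : ℕ) :
    c.hts t j ⊆ dTs c.A (c.sl t) ((c.sl t).S (PI j)) (c.w t) := by
  unfold hts hatS PI
  by_cases h : j % 2 = 1
  · rw [if_pos h]
    exact Set.inter_subset_left
  · rw [if_neg h]
    have : (j + 1) / 2 = j / 2 := by omega
    rw [this]
    exact Set.diff_subset

lemma hts_F (t : ℕ) {j : ℕ} (h : j % 2 = 1) : c.hts t j ⊆ c.A.F := by
  unfold hts hatS
  rw [if_pos h]
  exact Set.inter_subset_right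

lemma hts_nF (t : ℕ) {j : ℕ} (h : j % 2 = 0) {q : Q} (hq : q ∈ c.hts t j) :
    q ∉ c.A.F := by
  unfold hts hatS at hq
  rw [if_neg (by omega)] at hq
  exact hq.2

lemma exists_parent (t : ℕ) {j : ℕ} {q' : Q} (hq' : q' ∈ c.hts t j) :
    ∃ q ∈ (c.sl t).S (PI j), q' ∈ c.A.delta q (c.w t) := by
  have := c.hts_subset_dTs t j hq'
  unfold dTs at this
  rw [Set.mem_iUnion₂] at this
  obtain ⟨q, hq, hd⟩ := this
  exact ⟨q, hq, (Set.diff_subset) hd⟩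

lemma hts_disjoint (t : ℕ) {j j' : ℕ} (hj : j ∈ Set.Icc 1 (2 * (c.sl t).n))
    (hj' : j' ∈ Set.Icc 1 (2 * (c.sl t).n)) (hne : j ≠ j') {q' : Q}
    (h1 : q' ∈ c.hts t j) (h2 : q' ∈ c.hts t j') : False := by
  -- wlog on PI
  have key : ∀ j j', j ∈ Set.Icc 1 (2 * (c.sl t).n) → j' ∈ Set.Icc 1 (2 * (c.sl t).n) →
      PI j < PI j' → q' ∈ c.hts t j → q' ∈ c.hts t j' → False := by
    intro a b ha hb hab hqa hqb
    have hb2 := c.hts_subset_dTs t b hqb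
    unfold dTs at hb2
    rw [Set.mem_iUnion₂] at hb2
    obtain ⟨q2, hq2, hd2⟩ := hb2
    unfold dT at hd2
    have hidx : (c.sl t).idx q2 = PI b :=
      Slice.idx_eq (c.valid t) (PI_mem hb) hq2
    have ha2 := c.hts_subset_dTs t a hqa
    unfold dTs at ha2
    rw [Set.mem_iUnion₂] at ha2
    obtain ⟨q1, hq1, hd1⟩ := ha2
    apply hd2.2
    unfold NBA.nextSet
    rw [Set.mem_iUnion₂]
    refine ⟨q1, ?_, (Set.diff_subset hd1 : q' ∈ c.A.delta q1 (c.w t))⟩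
    rw [hidx]
    exact Set.mem_biUnion (show PI a ∈ Set.Ico 1 (PI b) from ⟨(PI_mem ha).1, hab⟩) hq1
  rcases lt_trichotomy (PI j) (PI j') with h | h | h
  · exact key j j' hj hj' h h1 h2
  · -- same parent: parities must differ
    have hpar : j % 2 ≠ j' % 2 := by
      intro hp
      apply hne
      unfold PI at h
      omega
    rcases Nat.mod_two_eq_zero_or_one j with h0 | h0
    · have h1' : j' % 2 = 1 := by omega
      exact c.hts_nF t h0 h1 (c.hts_F t h1' h2)
    · have h1' : j' % 2 = 0 := by omega
      exact c.hts_nF t h1' h2 (c.hts_F t h0 h1)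
  · exact key j' j hj' hj h h2 h1

/-! #### Dominating-rank lemmas -/

lemma red_le (t : ℕ) {v : ℕ} (hv : v ∈ redSet (c.sl t) (c.nt t) (c.xs t)) :
    c.dom t ≤ v := by
  unfold dom domRank
  rw [if_pos ⟨v, Set.mem_union_right _ hv⟩]
  exact Nat.sInf_le (Set.mem_union_right _ hv)

lemma green_le (t : ℕ) {v : ℕ} (hv : v ∈ greenSet c.A (c.sl t) (c.w t) (c.nt t) (c.xs t)) :
    c.dom t ≤ v := by
  unfold dom domRank
  rw [if_pos ⟨v, Set.mem_union_left _ hv⟩]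
  exact Nat.sInf_le (Set.mem_union_left _ hv)

lemma dom_ge (t : ℕ) (ht : 2 * c.k ≤ c.pr t) : c.k ≤ c.dom t := by
  rcases c.hPrio t with ⟨_, hp⟩ | ⟨_, hp⟩ <;> omega

lemma green_dom (t : ℕ) (hg : c.pr t = 2 * c.k) :
    c.dom t = c.k ∧ c.k ∈ greenSet c.A (c.sl t) (c.w t) (c.nt t) (c.xs t) := by
  have hk := c.hk
  rcases c.hPrio t with ⟨hG, hp⟩ | ⟨hG, hp⟩
  · have : c.dom t = c.k := by omega
    rw [this] at hG
    exact ⟨this, hG⟩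
  · -- 2 * dom - 1 = 2 * k impossible given k ≥ 1 (dom ≥ k from priority)
    have : 2 * c.k ≤ c.pr t := le_of_eq hg.symm
    have hd := c.dom_ge t this
    omega

lemma notgreen_dom (t : ℕ) (ht : 2 * c.k ≤ c.pr t) (hng : c.pr t ≠ 2 * c.k) :
    c.k < c.dom t := by
  have hd := c.dom_ge t ht
  rcases eq_or_lt_of_le hd with h | h
  · exfalso
    rcases c.hPrio t with ⟨_, hp⟩ | ⟨_, hp⟩ <;> omega
  · exact h

lemma not_red (t : ℕ) (ht : 2 * c.k ≤ c.pr t) {v : ℕ} (hv1 : 1 ≤ v) (hv : v ≤ c.k) :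
    v ∉ redSet (c.sl t) (c.nt t) (c.xs t) := by
  intro hR
  have hle := c.red_le t hR
  have hd := c.dom_ge t ht
  rcases eq_or_lt_of_le hv with h | h
  · -- v = k
    have hdom : c.dom t = v := by omega
    rcases c.hPrio t with ⟨hG, hp⟩ | ⟨hG, hp⟩
    · exact hR.2 (hdom ▸ hG.1)
    · rw [hdom] at hp
      omega
  · omega

lemma tilde_exists (t : ℕ) (ht : 2 * c.k ≤ c.pr t) {v : ℕ} (hv1 : 1 ≤ v) (hvk : v ≤ c.k)
    (hvn : v ≤ (c.sl t).n) : ∃ l ∈ Set.Icc 1 (c.nt t), c.tr t l = v := by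
  by_contra hcon
  push_neg at hcon
  apply c.not_red t ht hv1 hvk
  -- v is in the image of hatRk
  obtain ⟨iv, hiv, hrk⟩ := (c.valid t).2.2.1.2.2 (show v ∈ Set.Icc 1 (c.sl t).n from ⟨hv1, hvn⟩)
  obtain ⟨hiv1, hiv2⟩ := hiv
  refine ⟨⟨2 * iv, ⟨by omega, by omega⟩, ?_⟩, ?_⟩
  · unfold hatRk
    rw [if_neg (by omega)]
    have : 2 * iv / 2 = iv := by omega
    rw [this]
    exact hrk
  · push_neg
    intro l hl
    exact hcon l hl

lemma tr_val_even_witness (t : ℕ) {l v : ℕ} (hl : l ∈ Set.Icc 1 (c.nt t))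
    (hv : c.tr t l = v) (hvn : v ≤ (c.sl t).n) :
    ∃ j ∈ c.win t l, j % 2 = 0 ∧ j / 2 ∈ Set.Icc 1 (c.sl t).n ∧ (c.sl t).rk (j / 2) = v := by
  obtain ⟨j, hjw, hjv⟩ := c.tr_mem t hl
  rw [hv] at hjv
  have hj2n := c.window_subset t hl hjw
  obtain ⟨hja, hjb⟩ := hj2n
  unfold htr hatRk at hjv
  by_cases hpar : j % 2 = 1
  · rw [if_pos hpar] at hjv
    omega
  · rw [if_neg hpar] at hjv
    exact ⟨j, hjw, by omega, ⟨by omega, by omega⟩, hjv⟩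

lemma tilde_unique (t : ℕ) {l l' v : ℕ} (hl : l ∈ Set.Icc 1 (c.nt t))
    (hl' : l' ∈ Set.Icc 1 (c.nt t)) (hv : c.tr t l = v) (hv' : c.tr t l' = v)
    (hvn : v ≤ (c.sl t).n) : l = l' := by
  obtain ⟨j, hjw, hje, hj2, hjv⟩ := c.tr_val_even_witness t hl hv hvn
  obtain ⟨j', hjw', hje', hj2', hjv'⟩ := c.tr_val_even_witness t hl' hv' hvn
  have : j / 2 = j' / 2 := (c.valid t).2.2.1.2.1 hj2 hj2' (by rw [hjv, hjv'])
  have hjj : j = j' := by omega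
  subst hjj
  exact c.window_unique t hl hl' hjw hjw'

/-! #### Interval partition (merge) API -/

/-- The merged interval index containing prune index `l`. -/
noncomputable def MM (t l : ℕ) : ℕ := sInf {i | 1 ≤ i ∧ i ≤ c.nn t ∧ l ≤ c.bb t i}

lemma bb_mono (t : ℕ) : MonotoneOn (c.bb t) (Set.Icc 0 (c.nn t)) :=
  (c.hPart t).2.2.monotoneOn

lemma nn_pos (t : ℕ) {l : ℕ} (hl : l ∈ Set.Icc 1 (c.nt t)) : 1 ≤ c.nn t := by
  by_contra h
  have h0 := (c.hPart t).1
  have h1 := (c.hPart t).2.1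
  have hz : c.nn t = 0 := by omega
  rw [hz, h0] at h1
  have := hl.1
  have := hl.2
  omega

lemma MM_spec (t : ℕ) {l : ℕ} (hl : l ∈ Set.Icc 1 (c.nt t)) :
    c.MM t l ∈ Set.Icc 1 (c.nn t) ∧ c.bb t (c.MM t l - 1) + 1 ≤ l ∧ l ≤ c.bb t (c.MM t l) := by
  have hne : (c.nn t) ∈ {i | 1 ≤ i ∧ i ≤ c.nn t ∧ l ≤ c.bb t i} := by
    refine ⟨c.nn_pos t hl, le_refl _, ?_⟩
    rw [(c.hPart t).2.1]
    exact hl.2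
  have hmem : c.MM t l ∈ {i | 1 ≤ i ∧ i ≤ c.nn t ∧ l ≤ c.bb t i} :=
    Nat.sInf_mem (⟨_, hne⟩ : Set.Nonempty _)
  obtain ⟨h1, h2, h3⟩ := hmem
  refine ⟨⟨h1, h2⟩, ?_, h3⟩
  rcases eq_or_lt_of_le h1 with h | h
  · have h' : c.MM t l = 1 := h.symm
    rw [h']
    simp only [Nat.sub_self, (c.hPart t).1]
    have := hl.1
    omega
  · have hlt : c.MM t l - 1 < c.MM t l := by omega
    have hnotmem : c.MM t l - 1 ∉ {i | 1 ≤ i ∧ i ≤ c.nn t ∧ l ≤ c.bb t i} :=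
      Nat.notMem_of_lt_sInf hlt
    simp only [Set.mem_setOf_eq, not_and, not_le] at hnotmem
    have := hnotmem (by omega) (by omega)
    omega

lemma MM_le_of_le_bb (t : ℕ) {l i : ℕ} (hi : 1 ≤ i) (hinn : i ≤ c.nn t)
    (h : l ≤ c.bb t i) : c.MM t l ≤ i := Nat.sInf_le ⟨hi, hinn, h⟩

lemma MM_mono (t : ℕ) {l l' : ℕ} (hl' : l' ∈ Set.Icc 1 (c.nt t)) (h : l ≤ l') :
    c.MM t l ≤ c.MM t l' := by
  obtain ⟨hm, _, h3⟩ := c.MM_spec t hl'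
  exact c.MM_le_of_le_bb t hm.1 hm.2 (le_trans h h3)

lemma MM_unique (t : ℕ) {l i : ℕ} (hl : l ∈ Set.Icc 1 (c.nt t)) (hi : i ∈ Set.Icc 1 (c.nn t))
    (h1 : c.bb t (i - 1) + 1 ≤ l) (h2 : l ≤ c.bb t i) : c.MM t l = i := by
  obtain ⟨hm, hm1, hm2⟩ := c.MM_spec t hl
  have hle : c.MM t l ≤ i := c.MM_le_of_le_bb t hi.1 hi.2 h2
  rcases eq_or_lt_of_le hle with h | h
  · exact h
  · exfalso
    obtain ⟨hi1, hi2⟩ := hi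
    have hmono : c.bb t (c.MM t l) ≤ c.bb t (i - 1) :=
      c.bb_mono t ⟨Nat.zero_le _, hm.2⟩ ⟨Nat.zero_le _, by omega⟩ (by omega)
    omega

/-- `α̌` : the rank of merged interval `i`. -/
noncomputable def cf (t i : ℕ) : ℕ :=
  sInf (c.tr t '' Set.Icc (c.bb t (i - 1) + 1) (c.bb t i))

lemma interval_subset (t : ℕ) {i : ℕ} (hi : i ∈ Set.Icc 1 (c.nn t)) {l : ℕ}
    (hl : l ∈ Set.Icc (c.bb t (i - 1) + 1) (c.bb t i)) : l ∈ Set.Icc 1 (c.nt t) := by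
  obtain ⟨hl1, hl2⟩ := hl
  constructor
  · omega
  · have hb : c.bb t i ≤ c.nt t := by
      rw [← (c.hPart t).2.1]
      exact c.bb_mono t ⟨Nat.zero_le _, hi.2⟩ ⟨Nat.zero_le _, le_refl _⟩ hi.2
    omega

lemma interval_nonempty (t : ℕ) {i : ℕ} (hi : i ∈ Set.Icc 1 (c.nn t)) :
    c.bb t (i - 1) + 1 ≤ c.bb t i := by
  obtain ⟨hi1, hi2⟩ := hi
  have := (c.hPart t).2.2 (show (i - 1) ∈ Set.Icc 0 (c.nn t) from ⟨Nat.zero_le _, by omega⟩)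
    (show i ∈ Set.Icc 0 (c.nn t) from ⟨Nat.zero_le _, hi2⟩) (by omega)
  omega

lemma cf_le (t : ℕ) {i l : ℕ} (hl : l ∈ Set.Icc (c.bb t (i - 1) + 1) (c.bb t i)) :
    c.cf t i ≤ c.tr t l := Nat.sInf_le (Set.mem_image_of_mem _ hl)

lemma cf_mem (t : ℕ) {i : ℕ} (hi : i ∈ Set.Icc 1 (c.nn t)) :
    ∃ l ∈ Set.Icc (c.bb t (i - 1) + 1) (c.bb t i), c.tr t l = c.cf t i := by
  have hne : (c.tr t '' Set.Icc (c.bb t (i - 1) + 1) (c.bb t i)).Nonempty :=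
    ⟨c.tr t (c.bb t i), Set.mem_image_of_mem _ ⟨c.interval_nonempty t hi, le_refl _⟩⟩
  obtain ⟨l, hl, hv⟩ := Nat.sInf_mem hne
  exact ⟨l, hl, hv⟩

lemma tr_pos (t : ℕ) {l : ℕ} (hl : l ∈ Set.Icc 1 (c.nt t)) : 1 ≤ c.tr t l := by
  obtain ⟨j, hjw, hjv⟩ := c.tr_mem t hl
  obtain ⟨hja, hjb⟩ := c.window_subset t hl hjw
  rw [← hjv]
  unfold htr hatRk
  by_cases hpar : j % 2 = 1
  · rw [if_pos hpar]; omega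
  · rw [if_neg hpar]
    have hmem : j / 2 ∈ Set.Icc 1 (c.sl t).n := ⟨by omega, by omega⟩
    exact ((c.valid t).2.2.1.1 hmem).1

lemma singleton_interval (t : ℕ) {l : ℕ} (hl : l ∈ Set.Icc 1 (c.nt t))
    (hlt : c.tr t l < c.dom t) :
    c.bb t (c.MM t l) = c.bb t (c.MM t l - 1) + 1 := by
  obtain ⟨hm, h1, h2⟩ := c.MM_spec t hl
  exact ((c.hMC t) (c.MM t l) hm l ⟨h1, h2⟩).1 hlt

lemma end_interval (t : ℕ) {l : ℕ} (hl : l ∈ Set.Icc 1 (c.nt t))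
    (hle : c.tr t l ≤ c.dom t) : l = c.bb t (c.MM t l) := by
  obtain ⟨hm, h1, h2⟩ := c.MM_spec t hl
  rcases eq_or_lt_of_le hle with h | h
  · exact ((c.hMC t) (c.MM t l) hm l ⟨h1, h2⟩).2 h
  · have := c.singleton_interval t hl h
    omega

lemma cf_singleton (t : ℕ) {l : ℕ} (hl : l ∈ Set.Icc 1 (c.nt t))
    (hlt : c.tr t l < c.dom t) : c.cf t (c.MM t l) = c.tr t l := by
  obtain ⟨hm, h1, h2⟩ := c.MM_spec t hl
  have hsing := c.singleton_interval t hl hlt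
  have hll : l = c.bb t (c.MM t l) := by omega
  apply le_antisymm (c.cf_le t ⟨h1, h2⟩)
  obtain ⟨l', hl', hv⟩ := c.cf_mem t hm
  obtain ⟨ha', hb'⟩ := hl'
  have : l' = l := by omega
  rw [← hv, this]

lemma cf_host (t : ℕ) (ht : 2 * c.k ≤ c.pr t) {l : ℕ} (hl : l ∈ Set.Icc 1 (c.nt t))
    (hkv : c.tr t l = c.k) : c.cf t (c.MM t l) = c.k := by
  obtain ⟨hm, h1, h2⟩ := c.MM_spec t hl
  have hub : c.cf t (c.MM t l) ≤ c.k := hkv ▸ c.cf_le t ⟨h1, h2⟩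
  obtain ⟨l'', hl'', hv⟩ := c.cf_mem t hm
  by_contra hne
  have hlt : c.tr t l'' < c.k := by omega
  have hltd : c.tr t l'' < c.dom t := lt_of_lt_of_le hlt (c.dom_ge t ht)
  have hl''m : l'' ∈ Set.Icc 1 (c.nt t) := c.interval_subset t hm hl''
  have hMM : c.MM t l'' = c.MM t l := c.MM_unique t hl''m hm hl''.1 hl''.2
  have hsing := c.singleton_interval t hl''m hltd
  rw [hMM] at hsing
  have hle : l = l'' := by
    obtain ⟨ha, hb⟩ := hl''
    omega
  rw [← hle] at hv
  omega

/-! #### The host (rank `k`) tracking -/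

/-- Whether step `t` is a green (priority `2k`) step. -/
def isGreen (t : ℕ) : Prop := c.pr t = 2 * c.k

/-- The index of the rank-`k` set at time `t`. -/
noncomputable def hostIdx (t : ℕ) : ℕ :=
  sInf {i | i ∈ Set.Icc 1 (c.sl t).n ∧ (c.sl t).rk i = c.k}

/-- The rank-`k` set at time `t`. -/
noncomputable def host (t : ℕ) : Set Q := (c.sl t).S (c.hostIdx t)

lemma hostIdx_spec (t : ℕ) (hkn : c.k ≤ (c.sl t).n) :
    c.hostIdx t ∈ Set.Icc 1 (c.sl t).n ∧ (c.sl t).rk (c.hostIdx t) = c.k ∧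
      ∀ i ∈ Set.Icc 1 (c.sl t).n, (c.sl t).rk i = c.k → i = c.hostIdx t := by
  obtain ⟨i, hi, hrk⟩ := (c.valid t).2.2.1.2.2
    (show c.k ∈ Set.Icc 1 (c.sl t).n from ⟨c.hk, hkn⟩)
  have hmem : c.hostIdx t ∈ {i | i ∈ Set.Icc 1 (c.sl t).n ∧ (c.sl t).rk i = c.k} :=
    Nat.sInf_mem (⟨i, hi, hrk⟩ :
      Set.Nonempty {i | i ∈ Set.Icc 1 (c.sl t).n ∧ (c.sl t).rk i = c.k})
  obtain ⟨h1, h2⟩ := hmem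
  refine ⟨h1, h2, ?_⟩
  intro j hj hjrk
  exact (c.valid t).2.2.1.2.1 hj h1 (by rw [hjrk, h2])

/-- The prune index carrying rank `k` at time `t`. -/
noncomputable def lk (t : ℕ) : ℕ :=
  sInf {l | l ∈ Set.Icc 1 (c.nt t) ∧ c.tr t l = c.k}

lemma lk_spec (t : ℕ) (hlk : ∃ l ∈ Set.Icc 1 (c.nt t), c.tr t l = c.k) :
    c.lk t ∈ Set.Icc 1 (c.nt t) ∧ c.tr t (c.lk t) = c.k := by
  obtain ⟨l, hl, hv⟩ := hlk
  have hmem : c.lk t ∈ {l | l ∈ Set.Icc 1 (c.nt t) ∧ c.tr t l = c.k} :=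
    Nat.sInf_mem (⟨l, hl, hv⟩ :
      Set.Nonempty {l | l ∈ Set.Icc 1 (c.nt t) ∧ c.tr t l = c.k})
  exact hmem

lemma lk_exists (t : ℕ) (ht : 2 * c.k ≤ c.pr t) (hkn : c.k ≤ (c.sl t).n) :
    ∃ l ∈ Set.Icc 1 (c.nt t), c.tr t l = c.k :=
  c.tilde_exists t ht c.hk (le_refl _) hkn

lemma lk_unique (t : ℕ) (hkn : c.k ≤ (c.sl t).n)
    (hlk : ∃ l ∈ Set.Icc 1 (c.nt t), c.tr t l = c.k) {l : ℕ}
    (hl : l ∈ Set.Icc 1 (c.nt t)) (hv : c.tr t l = c.k) : l = c.lk t := by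
  obtain ⟨h1, h2⟩ := c.lk_spec t hlk
  exact c.tilde_unique t hl h1 hv h2 hkn

lemma host_window (t : ℕ) (ht : 2 * c.k ≤ c.pr t) (hkn : c.k ≤ (c.sl t).n) :
    c.xs t (c.lk t) ≤ 2 * c.hostIdx t ∧ 2 * c.hostIdx t < c.xs t (c.lk t + 1) := by
  obtain ⟨hl, hv⟩ := c.lk_spec t (c.lk_exists t ht hkn)
  obtain ⟨j, hjw, hje, hj2, hjv⟩ := c.tr_val_even_witness t hl hv hkn
  obtain ⟨hh1, hh2, _⟩ := c.hostIdx_spec t hkn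
  have : j / 2 = c.hostIdx t := (c.valid t).2.2.1.2.1 hj2 hh1 (by rw [hjv, hh2])
  have hj : j = 2 * c.hostIdx t := by omega
  rw [← hj]
  exact hjw

lemma k_le_n_succ_of_tilde (t : ℕ) (hlk : ∃ l ∈ Set.Icc 1 (c.nt t), c.tr t l = c.k) :
    c.k ≤ (c.sl t).n + 1 := by
  obtain ⟨l, hl, hv⟩ := hlk
  obtain ⟨j, hjw, hjv⟩ := c.tr_mem t hl
  obtain ⟨hja, hjb⟩ := c.window_subset t hl hjw
  rw [hv] at hjv
  unfold htr hatRk at hjv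
  by_cases hpar : j % 2 = 1
  · rw [if_pos hpar] at hjv
    omega
  · rw [if_neg hpar] at hjv
    have hmem : j / 2 ∈ Set.Icc 1 (c.sl t).n := ⟨by omega, by omega⟩
    have := ((c.valid t).2.2.1.1 hmem).2
    rw [hjv] at this
    omega

lemma cf_low_ex (t : ℕ) (ht : 2 * c.k ≤ c.pr t) {v : ℕ} (hv1 : 1 ≤ v) (hvlt : v < c.k)
    (hvn : v ≤ (c.sl t).n) : ∃ i ∈ Set.Icc 1 (c.nn t), c.cf t i = v := by
  obtain ⟨l, hl, hv⟩ := c.tilde_exists t ht hv1 (le_of_lt hvlt) hvn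
  refine ⟨c.MM t l, (c.MM_spec t hl).1, ?_⟩
  rw [c.cf_singleton t hl (by rw [hv]; exact lt_of_lt_of_le hvlt (c.dom_ge t ht))]
  exact hv

lemma cf_uniq (t : ℕ) (ht : 2 * c.k ≤ c.pr t) (hkn1 : c.k ≤ (c.sl t).n) :
    ∀ v ≤ c.k, ∀ i ∈ Set.Icc 1 (c.nn t), ∀ j ∈ Set.Icc 1 (c.nn t),
      c.cf t i = v → c.cf t j = v → i = j := by
  intro v hvk i hi j hj hci hcj
  obtain ⟨li, hli, hvi⟩ := c.cf_mem t hi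
  obtain ⟨lj, hlj, hvj⟩ := c.cf_mem t hj
  have hlim := c.interval_subset t hi hli
  have hljm := c.interval_subset t hj hlj
  have hll : li = lj := c.tilde_unique t hlim hljm (by rw [hvi, hci]) (by rw [hvj, hcj])
    (le_trans hvk hkn1)
  have h1 : c.MM t li = i := c.MM_unique t hlim hi hli.1 hli.2
  have h2 : c.MM t lj = j := c.MM_unique t hljm hj hlj.1 hlj.2
  rw [← h1, ← h2, hll]

lemma cf_pos (t : ℕ) : ∀ i ∈ Set.Icc 1 (c.nn t), 1 ≤ c.cf t i := by
  intro i hi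
  obtain ⟨l, hl, hv⟩ := c.cf_mem t hi
  rw [← hv]
  exact c.tr_pos t (c.interval_subset t hi hl)

/-- Base case: after a green step, rank `k` is present in the new slice. -/
lemma green_base (t : ℕ) (hg : c.isGreen t) : c.k ≤ (c.sl (t + 1)).n := by
  have ht : 2 * c.k ≤ c.pr t := le_of_eq hg.symm
  have hlk : ∃ l ∈ Set.Icc 1 (c.nt t), c.tr t l = c.k := (c.green_dom t hg).2.1
  obtain ⟨hlkm, hlkv⟩ := c.lk_spec t hlk
  have hn1 := c.k_le_n_succ_of_tilde t hlk
  have hle : c.k ≤ c.nn t := by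
    apply rank_count_le (c.cf t) (c.MM t (c.lk t)) (c.MM_spec t hlkm).1
      (c.cf_host t ht hlkm hlkv) c.hk
    intro v hv1 hvlt
    exact c.cf_low_ex t ht hv1 hvlt (by omega)
  rw [c.hn t]
  exact hle

/-- Inductive step: rank `k` stays present and the new host index is `MM (lk)`. -/
lemma newhost (t : ℕ) (ht : 2 * c.k ≤ c.pr t) (hkn : c.k ≤ (c.sl t).n) :
    c.k ≤ (c.sl (t + 1)).n ∧ c.hostIdx (t + 1) = c.MM t (c.lk t) := by
  have hlk := c.lk_exists t ht hkn
  obtain ⟨hlkm, hlkv⟩ := c.lk_spec t hlk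
  have hi₀ := (c.MM_spec t hlkm).1
  have hf0 := c.cf_host t ht hlkm hlkv
  have hlowex : ∀ v, 1 ≤ v → v < c.k → ∃ i ∈ Set.Icc 1 (c.nn t), c.cf t i = v :=
    fun v hv1 hvlt => c.cf_low_ex t ht hv1 hvlt (by omega)
  have hbij : Set.BijOn (c.sl (t + 1)).rk (Set.Icc 1 (c.nn t)) (Set.Icc 1 (c.nn t)) := by
    have := (c.hValid' t).2.2.1
    rw [c.hn t] at this
    exact this
  have hord : ∀ i ∈ Set.Icc 1 (c.nn t), ∀ j ∈ Set.Icc 1 (c.nn t),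
      c.cf t i < c.cf t j → (c.sl (t + 1)).rk i < (c.sl (t + 1)).rk j := by
    intro i hi j hj hij
    exact c.hOrd t i hi j hj hij
  have hrk : (c.sl (t + 1)).rk (c.MM t (c.lk t)) = c.k :=
    rank_count (c.cf t) (c.sl (t + 1)).rk hbij hord _ hi₀ hf0 c.hk hlowex
      (c.cf_uniq t ht hkn) (c.cf_pos t)
  have hle : c.k ≤ c.nn t :=
    rank_count_le (c.cf t) _ hi₀ hf0 c.hk hlowex
  have hkn' : c.k ≤ (c.sl (t + 1)).n := by rw [c.hn t]; exact hle
  refine ⟨hkn', ?_⟩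
  have hspec := c.hostIdx_spec (t + 1) hkn'
  exact (hspec.2.2 (c.MM t (c.lk t)) (by rw [c.hn t]; exact hi₀) hrk).symm

/-! #### Positional lemmas -/

lemma pos_le (t : ℕ) (ht : 2 * c.k ≤ c.pr t) (hkn : c.k ≤ (c.sl t).n) {l : ℕ}
    (hl : l ∈ Set.Icc 1 (c.nt t)) (hj : c.xs t l ≤ 2 * c.hostIdx t) :
    c.MM t l ≤ c.hostIdx (t + 1) := by
  obtain ⟨hw1, hw2⟩ := c.host_window t ht hkn
  obtain ⟨hlkm, hlkv⟩ := c.lk_spec t (c.lk_exists t ht hkn)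
  rw [(c.newhost t ht hkn).2]
  obtain ⟨hl1, hl2⟩ := hl
  obtain ⟨hlk1, hlk2⟩ := hlkm
  have hle : l ≤ c.lk t := by
    by_contra hgt
    push_neg at hgt
    have hxs : c.xs t (c.lk t + 1) ≤ c.xs t l := by
      rcases eq_or_lt_of_le (show c.lk t + 1 ≤ l by omega) with h | h
      · rw [h]
      · exact le_of_lt ((c.hPrune t).1 ⟨by omega, by omega⟩ ⟨hl1, hl2⟩ h)
    omega
  exact c.MM_mono t ⟨hlk1, hlk2⟩ hle

lemma pos_gt (t : ℕ) (ht : 2 * c.k ≤ c.pr t) (hkn : c.k ≤ (c.sl t).n) {l : ℕ}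
    (hl : l ∈ Set.Icc 1 (c.nt t)) (hj : 2 * c.hostIdx t < c.xs t l) :
    c.hostIdx (t + 1) < c.MM t l := by
  obtain ⟨hw1, hw2⟩ := c.host_window t ht hkn
  obtain ⟨hlkm, hlkv⟩ := c.lk_spec t (c.lk_exists t ht hkn)
  rw [(c.newhost t ht hkn).2]
  obtain ⟨hl1, hl2⟩ := hl
  obtain ⟨hlk1, hlk2⟩ := hlkm
  have hlkl : c.lk t < l := by
    by_contra hle
    push_neg at hle
    have : c.xs t l ≤ c.xs t (c.lk t) :=
      ((c.hPrune t).1).monotoneOn ⟨hl1, hl2⟩ ⟨hlk1, hlk2⟩ hle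
    omega
  have hMMle : c.MM t (c.lk t) ≤ c.MM t l := c.MM_mono t ⟨hl1, hl2⟩ (le_of_lt hlkl)
  have hend : c.lk t = c.bb t (c.MM t (c.lk t)) :=
    c.end_interval t ⟨hlk1, hlk2⟩ (by rw [hlkv]; exact c.dom_ge t ht)
  rcases eq_or_lt_of_le hMMle with h | h
  · exfalso
    have := (c.MM_spec t ⟨hl1, hl2⟩).2.2
    rw [← h] at this
    omega
  · exact h

lemma pos_host (t : ℕ) (ht : 2 * c.k ≤ c.pr t) (hkn : c.k ≤ (c.sl t).n) {l : ℕ}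
    (hl : l ∈ Set.Icc 1 (c.nt t)) (hj : c.xs t l = 2 * c.hostIdx t) :
    c.MM t l = c.hostIdx (t + 1) := by
  obtain ⟨hw1, hw2⟩ := c.host_window t ht hkn
  obtain ⟨hlkm, hlkv⟩ := c.lk_spec t (c.lk_exists t ht hkn)
  rw [(c.newhost t ht hkn).2]
  obtain ⟨hl1, hl2⟩ := hl
  obtain ⟨hlk1, hlk2⟩ := hlkm
  have : l = c.lk t := by
    rcases lt_trichotomy l (c.lk t) with h | h | h
    · exfalso
      have : c.xs t l < c.xs t (c.lk t) := (c.hPrune t).1 ⟨hl1, hl2⟩ ⟨hlk1, hlk2⟩ h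
      omega
    · exact h
    · exfalso
      have hxs : c.xs t (c.lk t + 1) ≤ c.xs t l := by
        rcases eq_or_lt_of_le (show c.lk t + 1 ≤ l by omega) with h' | h'
        · rw [h']
        · exact le_of_lt ((c.hPrune t).1 ⟨by omega, by omega⟩ ⟨hl1, hl2⟩ h')
      omega
  rw [this]

lemma green_empty (t : ℕ) (hg : c.isGreen t) (hkn : c.k ≤ (c.sl t).n) :
    c.hts t (2 * c.hostIdx t) = ∅ := by
  obtain ⟨hdom, hG⟩ := c.green_dom t hg
  obtain ⟨j, hj2n, hemp, hrkj⟩ := hG.2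
  obtain ⟨hja, hjb⟩ := hj2n
  unfold hatRk at hrkj
  by_cases hpar : j % 2 = 1
  · rw [if_pos hpar] at hrkj
    exfalso
    omega
  · rw [if_neg hpar] at hrkj
    have hmem : j / 2 ∈ Set.Icc 1 (c.sl t).n := ⟨by omega, by omega⟩
    obtain ⟨hh1, hh2, _⟩ := c.hostIdx_spec t hkn
    have heq : j / 2 = c.hostIdx t := (c.valid t).2.2.1.2.1 hmem hh1 (by rw [hrkj, hh2])
    have hj : j = 2 * c.hostIdx t := by omega
    rw [← hj]
    exact hemp

/-! #### States of the successor slice, hat positions, canonical parents -/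

lemma states_succ (t : ℕ) {q' : Q} (hq' : q' ∈ (c.sl (t + 1)).states) :
    ∃ l ∈ Set.Icc 1 (c.nt t), q' ∈ c.hts t (c.xs t l) ∧
      (c.sl (t + 1)).idx q' = c.MM t l := by
  obtain ⟨i, hi, hqi⟩ := Set.mem_iUnion₂.1 hq'
  have hi' : i ∈ Set.Icc 1 (c.nn t) := by rw [← c.hn t]; exact hi
  have hidx : (c.sl (t + 1)).idx q' = i := Slice.idx_eq (c.hValid' t) hi hqi
  rw [c.hS t i hi'] at hqi
  obtain ⟨l, hl, hql⟩ := Set.mem_iUnion₂.1 hqi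
  have hlm : l ∈ Set.Icc 1 (c.nt t) := c.interval_subset t hi' hl
  have hMM : c.MM t l = i := c.MM_unique t hlm hi' hl.1 hl.2
  exact ⟨l, hlm, hql, by rw [hidx, hMM]⟩

lemma hat_l_unique (t : ℕ) {l l' : ℕ} (hl : l ∈ Set.Icc 1 (c.nt t))
    (hl' : l' ∈ Set.Icc 1 (c.nt t)) {q' : Q} (h1 : q' ∈ c.hts t (c.xs t l))
    (h2 : q' ∈ c.hts t (c.xs t l')) : l = l' := by
  by_contra hne
  have hxs : c.xs t l ≠ c.xs t l' := by
    rcases lt_trichotomy l l' with h | h | h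
    · exact ne_of_lt ((c.hPrune t).1 hl hl' h)
    · exact absurd h hne
    · exact (ne_of_lt ((c.hPrune t).1 hl' hl h)).symm
  exact c.hts_disjoint t ((c.hPrune t).2.1 l hl).1 ((c.hPrune t).2.1 l' hl').1 hxs h1 h2

/-- The prune index of the hat set containing `q'`. -/
noncomputable def pl (t : ℕ) (q' : Q) : ℕ :=
  sInf {l | l ∈ Set.Icc 1 (c.nt t) ∧ q' ∈ c.hts t (c.xs t l)}

lemma pl_spec (t : ℕ) {q' : Q} (hq' : q' ∈ (c.sl (t + 1)).states) :
    c.pl t q' ∈ Set.Icc 1 (c.nt t) ∧ q' ∈ c.hts t (c.xs t (c.pl t q')) ∧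
      (c.sl (t + 1)).idx q' = c.MM t (c.pl t q') := by
  obtain ⟨l, hl, hql, hidx⟩ := c.states_succ t hq'
  have hmem : c.pl t q' ∈ {l | l ∈ Set.Icc 1 (c.nt t) ∧ q' ∈ c.hts t (c.xs t l)} :=
    Nat.sInf_mem ⟨l, hl, hql⟩
  obtain ⟨h1, h2⟩ := hmem
  have heq : c.pl t q' = l := c.hat_l_unique t h1 hl h2 hql
  exact ⟨h1, h2, by rw [hidx, heq]⟩

/-- The canonical parent of `q'` (at time `t + 1`). -/
noncomputable def cp (t : ℕ) (q' : Q) : Q :=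
  @Classical.epsilon Q ⟨c.hQ0.some⟩
    (fun q => q ∈ (c.sl t).S (PI (c.xs t (c.pl t q'))) ∧ q' ∈ c.A.delta q (c.w t))

lemma cp_spec (t : ℕ) {q' : Q} (hq' : q' ∈ (c.sl (t + 1)).states) :
    c.cp t q' ∈ (c.sl t).S (PI (c.xs t (c.pl t q'))) ∧ q' ∈ c.A.delta (c.cp t q') (c.w t) := by
  obtain ⟨h1, h2, _⟩ := c.pl_spec t hq'
  obtain ⟨q, hq, hd⟩ := c.exists_parent t h2
  exact Classical.epsilon_spec_aux ⟨c.hQ0.some⟩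
    (fun q => q ∈ (c.sl t).S (PI (c.xs t (c.pl t q'))) ∧ q' ∈ c.A.delta q (c.w t)) ⟨q, hq, hd⟩

lemma cp_idx (t : ℕ) {q' : Q} (hq' : q' ∈ (c.sl (t + 1)).states) :
    (c.sl t).idx (c.cp t q') = PI (c.xs t (c.pl t q')) ∧ c.cp t q' ∈ (c.sl t).states := by
  obtain ⟨h1, _, _⟩ := c.pl_spec t hq'
  have hPImem : PI (c.xs t (c.pl t q')) ∈ Set.Icc 1 (c.sl t).n :=
    PI_mem ((c.hPrune t).2.1 _ h1).1
  obtain ⟨hmem, _⟩ := c.cp_spec t hq'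
  exact ⟨Slice.idx_eq (c.valid t) hPImem hmem, Slice.mem_states_of_mem hPImem hmem⟩

lemma pl_F (t : ℕ) {q' : Q} (hq' : q' ∈ (c.sl (t + 1)).states) :
    (q' ∈ c.A.F ↔ c.xs t (c.pl t q') % 2 = 1) := by
  obtain ⟨h1, h2, _⟩ := c.pl_spec t hq'
  constructor
  · intro hF
    by_contra hpar
    exact c.hts_nF t (by omega) h2 hF
  · intro hpar
    exact c.hts_F t hpar h2

lemma pl_j_bounds (t : ℕ) {q' : Q} (hq' : q' ∈ (c.sl (t + 1)).states) :
    c.xs t (c.pl t q') ≤ 2 * PI (c.xs t (c.pl t q')) ∧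
      2 * PI (c.xs t (c.pl t q')) ≤ c.xs t (c.pl t q') + 1 := by
  unfold PI
  omega

/-- The state-level per-step positional facts. -/
lemma state_step (t : ℕ) (ht : 2 * c.k ≤ c.pr t) (hkn : c.k ≤ (c.sl t).n) {q' : Q}
    (hq' : q' ∈ (c.sl (t + 1)).states) :
    ((c.sl t).idx (c.cp t q') ≤ c.hostIdx t → (c.sl (t + 1)).idx q' ≤ c.hostIdx (t + 1)) ∧
    (c.hostIdx t < (c.sl t).idx (c.cp t q') → c.hostIdx (t + 1) < (c.sl (t + 1)).idx q') ∧
    ((c.sl t).idx (c.cp t q') = c.hostIdx t → q' ∉ c.A.F →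
      (c.sl (t + 1)).idx q' = c.hostIdx (t + 1)) := by
  obtain ⟨hplm, hhat, hidx'⟩ := c.pl_spec t hq'
  obtain ⟨hpidx, hpmem⟩ := c.cp_idx t hq'
  obtain ⟨hb1, hb2⟩ := c.pl_j_bounds t hq'
  refine ⟨?_, ?_, ?_⟩
  · intro hle
    rw [hpidx] at hle
    rw [hidx']
    exact c.pos_le t ht hkn hplm (by omega)
  · intro hgt
    rw [hpidx] at hgt
    rw [hidx']
    exact c.pos_gt t ht hkn hplm (by omega)
  · intro heq hF
    rw [hpidx] at heq
    have hpar : c.xs t (c.pl t q') % 2 = 0 := by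
      rcases Nat.mod_two_eq_zero_or_one (c.xs t (c.pl t q')) with h | h
      · exact h
      · exact absurd ((c.pl_F t hq').2 h) hF
    have hjeq : c.xs t (c.pl t q') = 2 * c.hostIdx t := by
      unfold PI at heq
      omega
    rw [hidx']
    exact c.pos_host t ht hkn hplm hjeq

/-- Order preservation: comparing against a non-accepting state. -/
lemma state_order (t : ℕ) {q1 q2 : Q} (h1 : q1 ∈ (c.sl (t + 1)).states)
    (h2 : q2 ∈ (c.sl (t + 1)).states)
    (hp : (c.sl t).idx (c.cp t q1) ≤ (c.sl t).idx (c.cp t q2)) (hF : q2 ∉ c.A.F) :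
    (c.sl (t + 1)).idx q1 ≤ (c.sl (t + 1)).idx q2 := by
  obtain ⟨hplm1, hhat1, hidx1⟩ := c.pl_spec t h1
  obtain ⟨hplm2, hhat2, hidx2⟩ := c.pl_spec t h2
  obtain ⟨hpidx1, _⟩ := c.cp_idx t h1
  obtain ⟨hpidx2, _⟩ := c.cp_idx t h2
  obtain ⟨ha1, ha2⟩ := c.pl_j_bounds t h1
  obtain ⟨hc1, hc2⟩ := c.pl_j_bounds t h2
  have hpar2 : c.xs t (c.pl t q2) % 2 = 0 := by
    rcases Nat.mod_two_eq_zero_or_one (c.xs t (c.pl t q2)) with h | h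
    · exact h
    · exact absurd ((c.pl_F t h2).2 h) hF
  -- j1 ≤ j2
  have hj : c.xs t (c.pl t q1) ≤ c.xs t (c.pl t q2) := by
    rw [hpidx1, hpidx2] at hp
    unfold PI at hp
    omega
  -- l1 ≤ l2
  have hl : c.pl t q1 ≤ c.pl t q2 := by
    by_contra hgt
    push_neg at hgt
    have := (c.hPrune t).1 hplm2 hplm1 hgt
    omega
  rw [hidx1, hidx2]
  exact c.MM_mono t hplm2 hl

/-- At a green step the host has no non-accepting children. -/
lemma state_green (t : ℕ) (hg : c.isGreen t) (hkn : c.k ≤ (c.sl t).n) {q' : Q}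
    (hq' : q' ∈ (c.sl (t + 1)).states)
    (hpar : (c.sl t).idx (c.cp t q') = c.hostIdx t) : q' ∈ c.A.F := by
  by_contra hF
  obtain ⟨hplm, hhat, _⟩ := c.pl_spec t hq'
  obtain ⟨hpidx, _⟩ := c.cp_idx t hq'
  have hpar2 : c.xs t (c.pl t q') % 2 = 0 := by
    rcases Nat.mod_two_eq_zero_or_one (c.xs t (c.pl t q')) with h | h
    · exact h
    · exact absurd ((c.pl_F t hq').2 h) hF
  have hjeq : c.xs t (c.pl t q') = 2 * c.hostIdx t := by
    rw [hpidx] at hpar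
    unfold PI at hpar
    omega
  rw [hjeq] at hhat
  rw [c.green_empty t hg hkn] at hhat
  exact hhat

/-! #### Global invariants along the run -/

/-- A green time `≥ N0`. -/
noncomputable def gt0 : ℕ := (c.hgr c.N0).choose

lemma gt0_spec : c.N0 ≤ c.gt0 ∧ c.pr c.gt0 = 2 * c.k := (c.hgr c.N0).choose_spec

/-- The stabilisation time: one step after a green time past `N0`. -/
noncomputable def T0 : ℕ := c.gt0 + 1

lemma prio_ge (t : ℕ) (ht : c.N0 ≤ t) : 2 * c.k ≤ c.pr t := c.hN0 t ht

lemma N0_le_T0 : c.N0 ≤ c.T0 := by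
  have := c.gt0_spec.1
  unfold T0
  omega

lemma kn_ge : ∀ t, c.T0 ≤ t → c.k ≤ (c.sl t).n := by
  intro t ht
  induction t, ht using Nat.le_induction with
  | base => exact c.green_base c.gt0 c.gt0_spec.2
  | succ n hn ih =>
    have hN : c.N0 ≤ n := le_trans c.N0_le_T0 hn
    exact (c.newhost n (c.prio_ge n hN) ih).1

lemma green_exists (T' : ℕ) : ∃ t, T' ≤ t ∧ c.isGreen t := c.hgr T'

lemma host_nonempty (t : ℕ) (ht : c.T0 ≤ t) : (c.host t).Nonempty :=
  (c.valid t).1 _ (c.hostIdx_spec t (c.kn_ge t ht)).1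

lemma host_states (t : ℕ) (ht : c.T0 ≤ t) {q : Q} (hq : q ∈ c.host t) :
    q ∈ (c.sl t).states ∧ (c.sl t).idx q = c.hostIdx t := by
  have hspec := (c.hostIdx_spec t (c.kn_ge t ht)).1
  exact ⟨Slice.mem_states_of_mem hspec hq, Slice.idx_eq (c.valid t) hspec hq⟩

/-! #### Ancestor chains -/

/-- `anc s t q` : the canonical ancestor at time `s` of the state `q` at time `t`. -/
noncomputable def anc (s : ℕ) : ℕ → Q → Q
  | 0, q => q
  | t + 1, q => if t + 1 ≤ s then q else anc s t (c.cp t q)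

lemma anc_self (s : ℕ) (q : Q) : c.anc s s q = q := by
  cases s with
  | zero => rfl
  | succ m => unfold anc; rw [if_pos (le_refl _)]

lemma anc_succ {s t : ℕ} (h : s ≤ t) (q : Q) :
    c.anc s (t + 1) q = c.anc s t (c.cp t q) := by
  rw [show c.anc s (t + 1) q = if t + 1 ≤ s then q else c.anc s t (c.cp t q) from rfl,
    if_neg (by omega)]

lemma anc_states {s : ℕ} : ∀ {t : ℕ}, s ≤ t → ∀ {q : Q}, q ∈ (c.sl t).states →
    c.anc s t q ∈ (c.sl s).states := by
  intro t
  induction t with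
  | zero =>
    intro h q hq
    have : s = 0 := by omega
    subst this
    rw [c.anc_self]
    exact hq
  | succ m ih =>
    intro h q hq
    rcases eq_or_lt_of_le h with he | hlt
    · subst he
      rw [c.anc_self]
      exact hq
    · rw [c.anc_succ (by omega)]
      exact ih (by omega) (c.cp_idx m hq).2

lemma anc_step {s : ℕ} : ∀ {t : ℕ}, s < t → ∀ (q : Q),
    c.anc s t q = c.cp s (c.anc (s + 1) t q) := by
  intro t
  induction t with
  | zero => intro h; omega
  | succ m ih =>
    intro h q
    rcases eq_or_lt_of_le (Nat.succ_le_of_lt h) with he | hlt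
    · have : s = m := by omega
      subst this
      rw [c.anc_succ (le_refl s), c.anc_self, c.anc_self]
    · rw [c.anc_succ (by omega), c.anc_succ (by omega : s + 1 ≤ m)]
      exact ih (by omega) (c.cp m q)

/-! #### Pigeonhole and the König branch -/

lemma pigeon {P : ℕ → Q → Prop} (h : ∀ T', ∃ t, T' ≤ t ∧ ∃ q, P t q) :
    ∃ q, ∀ T', ∃ t, T' ≤ t ∧ P t q := by
  by_contra hc
  push_neg at hc
  choose TT hTT using hc
  obtain ⟨t, ht, q, hPq⟩ := h (Finset.univ.sup TT)
  exact hTT q t (le_trans (Finset.le_sup (Finset.mem_univ q)) ht) hPq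

/-- `q` (at time `s`) has host descendants at arbitrarily late times. -/
def HD (s : ℕ) (q : Q) : Prop :=
  ∀ T', ∃ t, T' ≤ t ∧ ∃ q', c.T0 ≤ t ∧ s ≤ t ∧ q' ∈ c.host t ∧ c.anc s t q' = q

lemma HD_start : ∃ q, q ∈ (c.sl c.T0).states ∧ c.HD c.T0 q := by
  have h : ∀ T', ∃ t, T' ≤ t ∧ ∃ qq : Q,
      (∃ q', c.T0 ≤ t ∧ c.T0 ≤ t ∧ q' ∈ c.host t ∧ c.anc c.T0 t q' = qq) := by
    intro T'
    obtain ⟨q', hq'⟩ := c.host_nonempty (max T' c.T0) (le_max_right _ _)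
    exact ⟨max T' c.T0, le_max_left _ _, c.anc c.T0 (max T' c.T0) q', q',
      le_max_right _ _, le_max_right _ _, hq', rfl⟩
  obtain ⟨q, hq⟩ := pigeon h
  refine ⟨q, ?_, hq⟩
  obtain ⟨t, _, q', h1, h2, h3, h4⟩ := hq 0
  rw [← h4]
  exact c.anc_states h2 (c.host_states t h1 h3).1

lemma HD_step {s : ℕ} {q : Q} (hs : c.T0 ≤ s) (hHD : c.HD s q) :
    ∃ q'', (q'' ∈ (c.sl (s + 1)).states ∧ c.HD (s + 1) q'') ∧ c.cp s q'' = q := by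
  have h : ∀ T', ∃ t, T' ≤ t ∧ ∃ qq : Q,
      ((∃ q', c.T0 ≤ t ∧ s + 1 ≤ t ∧ q' ∈ c.host t ∧ c.anc (s + 1) t q' = qq) ∧
        c.cp s qq = q) := by
    intro T'
    obtain ⟨t, ht, q', h1, h2, h3, h4⟩ := hHD (max T' (s + 1))
    have hst : s + 1 ≤ t := le_trans (le_max_right _ _) ht
    refine ⟨t, le_trans (le_max_left _ _) ht, c.anc (s + 1) t q',
      ⟨q', h1, hst, h3, rfl⟩, ?_⟩
    rw [← c.anc_step (by omega : s < t) q']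
    exact h4
  obtain ⟨qq, hqq⟩ := pigeon h
  obtain ⟨t, ht, ⟨q', h1, h2, h3, h4⟩, hcp⟩ := hqq 0
  refine ⟨qq, ⟨?_, ?_⟩, hcp⟩
  · rw [← h4]
    exact c.anc_states h2 (c.host_states t h1 h3).1
  · intro T'
    obtain ⟨t', ht', hP⟩ := hqq T'
    exact ⟨t', ht', hP.1⟩

/-- One step of the König branch. -/
noncomputable def bstep (s : ℕ) (q : Q) (hs : c.T0 ≤ s) (hHD : c.HD s q) : Q :=
  (c.HD_step hs hHD).choose

lemma bstep_spec (s : ℕ) (q : Q) (hs : c.T0 ≤ s) (hHD : c.HD s q) :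
    (c.bstep s q hs hHD ∈ (c.sl (s + 1)).states ∧ c.HD (s + 1) (c.bstep s q hs hHD)) ∧
      c.cp s (c.bstep s q hs hHD) = q :=
  (c.HD_step hs hHD).choose_spec

/-- The König branch, indexed by offset from `T0`. -/
noncomputable def RR : (m : ℕ) → {q : Q // q ∈ (c.sl (c.T0 + m)).states ∧ c.HD (c.T0 + m) q}
  | 0 => ⟨c.HD_start.choose, c.HD_start.choose_spec⟩
  | m + 1 =>
    ⟨c.bstep (c.T0 + m) (RR m).val (by omega) (RR m).property.2,
      (c.bstep_spec (c.T0 + m) (RR m).val (by omega) (RR m).property.2).1⟩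

/-- The branch as a function. -/
noncomputable def rr (m : ℕ) : Q := (c.RR m).val

lemma rr_states (m : ℕ) : c.rr m ∈ (c.sl (c.T0 + m)).states := (c.RR m).property.1

lemma rr_HD (m : ℕ) : c.HD (c.T0 + m) (c.rr m) := (c.RR m).property.2

lemma rr_cp (m : ℕ) : c.cp (c.T0 + m) (c.rr (m + 1)) = c.rr m :=
  (c.bstep_spec (c.T0 + m) (c.RR m).val (by omega) (c.RR m).property.2).2

lemma rr_delta (m : ℕ) : c.rr (m + 1) ∈ c.A.delta (c.rr m) (c.w (c.T0 + m)) := by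
  have h := (c.cp_spec (c.T0 + m) (c.rr_states (m + 1))).2
  rw [c.rr_cp m] at h
  exact h

/-! #### The branch visits `F` infinitely often -/

lemma rr_host_step {m : ℕ} (hF : c.rr (m + 1) ∉ c.A.F)
    (hhost : (c.sl (c.T0 + m)).idx (c.rr m) = c.hostIdx (c.T0 + m)) :
    (c.sl (c.T0 + m + 1)).idx (c.rr (m + 1)) = c.hostIdx (c.T0 + m + 1) := by
  have ht := c.prio_ge (c.T0 + m) (by have := c.N0_le_T0; omega)
  have hkn := c.kn_ge (c.T0 + m) (by omega)
  have h := (c.state_step (c.T0 + m) ht hkn (c.rr_states (m + 1))).2.2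
  rw [c.rr_cp m] at h
  exact h hhost hF

lemma rr_F_io (M : ℕ) : ∃ m, M ≤ m ∧ c.rr m ∈ c.A.F := by
  by_contra hcon
  push_neg at hcon
  -- Step 1: the branch is never in the host after M.
  have hnohost : ∀ m, M ≤ m → (c.sl (c.T0 + m)).idx (c.rr m) ≠ c.hostIdx (c.T0 + m) := by
    intro m hm hhost
    obtain ⟨g, hg1, hg2⟩ := c.green_exists (c.T0 + m)
    have hstay : ∀ m', m ≤ m' → (c.sl (c.T0 + m')).idx (c.rr m') = c.hostIdx (c.T0 + m') := by
      intro m' hm'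
      induction m', hm' using Nat.le_induction with
      | base => exact hhost
      | succ n hn ih => exact c.rr_host_step (hcon (n + 1) (by omega)) ih
    set m' := g - c.T0 with hm'def
    have hgeq : g = c.T0 + m' := by omega
    have hsg : c.rr (m' + 1) ∈ c.A.F := by
      have hst : c.rr (m' + 1) ∈ (c.sl (g + 1)).states := by
        rw [hgeq]
        exact c.rr_states (m' + 1)
      have hpar : (c.sl g).idx (c.cp g (c.rr (m' + 1))) = c.hostIdx g := by
        have hcp : c.cp g (c.rr (m' + 1)) = c.rr m' := by
          rw [hgeq]
          exact c.rr_cp m'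
        rw [hcp, hgeq]
        exact hstay m' (by omega)
      exact c.state_green g hg2 (c.kn_ge g (by omega)) hst hpar
    exact hcon (m' + 1) (by omega) hsg
  -- Step 2: the side of the branch relative to the host is fixed.
  have hM := hnohost M (le_refl M)
  -- obtain the chain witness
  obtain ⟨t, ht1, q', hT0t, hst, hq'host, hanc⟩ := c.rr_HD M (c.T0 + M)
  have hqstates : q' ∈ (c.sl t).states := (c.host_states t hT0t hq'host).1
  have hqidx : (c.sl t).idx q' = c.hostIdx t := (c.host_states t hT0t hq'host).2
  rcases lt_or_gt_of_ne hM with hlt | hgt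
  · -- branch strictly left of host forever
    have hside : ∀ m', M ≤ m' →
        (c.sl (c.T0 + m')).idx (c.rr m') < c.hostIdx (c.T0 + m') := by
      intro m' hm'
      induction m', hm' using Nat.le_induction with
      | base => exact hlt
      | succ n hn ih =>
        have ht' := c.prio_ge (c.T0 + n) (by have := c.N0_le_T0; omega)
        have hkn := c.kn_ge (c.T0 + n) (by omega)
        have h := (c.state_step (c.T0 + n) ht' hkn (c.rr_states (n + 1))).1
        rw [c.rr_cp n] at h
        exact lt_of_le_of_ne (h (le_of_lt ih)) (hnohost (n + 1) (by omega))
    -- chain comparison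
    have hchain : ∀ s, c.T0 + M ≤ s → s ≤ t →
        (c.sl s).idx (c.anc s t q') ≤ (c.sl s).idx (c.rr (s - c.T0)) := by
      intro s hs
      induction s, hs using Nat.le_induction with
      | base =>
        intro _
        rw [hanc, show c.T0 + M - c.T0 = M by omega]
      | succ s hs ih =>
        intro hle
        have hih := ih (by omega)
        have h1 : c.anc (s + 1) t q' ∈ (c.sl (s + 1)).states :=
          c.anc_states hle hqstates
        have h2 : c.rr (s - c.T0 + 1) ∈ (c.sl (s + 1)).states := by
          have := c.rr_states (s - c.T0 + 1)
          rw [show c.T0 + (s - c.T0 + 1) = s + 1 by omega] at this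
          exact this
        have hcp2 : c.cp s (c.rr (s - c.T0 + 1)) = c.rr (s - c.T0) := by
          have := c.rr_cp (s - c.T0)
          rw [show c.T0 + (s - c.T0) = s by omega] at this
          exact this
        have hp : (c.sl s).idx (c.cp s (c.anc (s + 1) t q')) ≤
            (c.sl s).idx (c.cp s (c.rr (s - c.T0 + 1))) := by
          rw [hcp2, ← c.anc_step (by omega : s < t) q']
          exact hih
        have hF2 : c.rr (s - c.T0 + 1) ∉ c.A.F := hcon (s - c.T0 + 1) (by omega)
        have := c.state_order s h1 h2 hp hF2
        rw [show s + 1 - c.T0 = s - c.T0 + 1 by omega]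
        exact this
    have hfin := hchain t (by omega) (le_refl t)
    rw [c.anc_self, hqidx] at hfin
    have hfin2 := hside (t - c.T0) (by omega)
    rw [show c.T0 + (t - c.T0) = t by omega] at hfin2
    omega
  · -- branch strictly right of host forever: the chain stays right, contradiction at `t`
    have hchain : ∀ s, c.T0 + M ≤ s → s ≤ t →
        c.hostIdx s < (c.sl s).idx (c.anc s t q') := by
      intro s hs
      induction s, hs using Nat.le_induction with
      | base =>
        intro _
        rw [hanc]
        exact hgt
      | succ s hs ih =>
        intro hle
        have hih := ih (by omega)
        have ht' := c.prio_ge s (by have := c.N0_le_T0; omega)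
        have hkn := c.kn_ge s (by omega)
        have h1 : c.anc (s + 1) t q' ∈ (c.sl (s + 1)).states :=
          c.anc_states hle hqstates
        have h := (c.state_step s ht' hkn h1).2.1
        rw [← c.anc_step (by omega : s < t) q'] at h
        exact h hih
    have hfin := hchain t (by omega) (le_refl t)
    rw [c.anc_self, hqidx] at hfin
    omega

/-! #### Assembling the accepting run -/

/-- The full run of `A`. -/
noncomputable def rho (t : ℕ) : Q :=
  if t ≤ c.T0 then c.anc t c.T0 (c.rr 0) else c.rr (t - c.T0)

lemma rho_eq_rr (m : ℕ) : c.rho (c.T0 + m) = c.rr m := by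
  cases m with
  | zero =>
    unfold rho
    rw [if_pos (by omega)]
    exact c.anc_self c.T0 (c.rr 0)
  | succ n =>
    unfold rho
    rw [if_neg (by omega), show c.T0 + (n + 1) - c.T0 = n + 1 by omega]

lemma rho_zero : c.rho 0 ∈ c.A.Q0 := by
  have hmem : c.rho 0 ∈ (c.sl 0).states := by
    unfold rho
    rw [if_pos (Nat.zero_le _)]
    exact c.anc_states (Nat.zero_le _) (c.rr_states 0)
  obtain ⟨i, hi, hq⟩ := Set.mem_iUnion₂.1 hmem
  have hn0 : (c.sl 0).n = 1 := c.hB.1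
  have : i = 1 := by
    obtain ⟨h1, h2⟩ := hi
    omega
  subst this
  have hS0 : (c.sl 0).S 1 = c.A.Q0 := c.hB.2.1
  rw [← hS0]
  exact hq

lemma rho_step (t : ℕ) : c.rho (t + 1) ∈ c.A.delta (c.rho t) (c.w t) := by
  by_cases h : t + 1 ≤ c.T0
  · have h1 : c.rho (t + 1) = c.anc (t + 1) c.T0 (c.rr 0) := by
      unfold rho
      rw [if_pos h]
    have h0 : c.rho t = c.cp t (c.rho (t + 1)) := by
      rw [h1]
      unfold rho
      rw [if_pos (by omega : t ≤ c.T0)]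
      exact c.anc_step (by omega) (c.rr 0)
    have hmem : c.rho (t + 1) ∈ (c.sl (t + 1)).states := by
      rw [h1]
      exact c.anc_states h (c.rr_states 0)
    rw [h0]
    exact (c.cp_spec t hmem).2
  · have hT0 : c.T0 ≤ t := by omega
    have h1 : c.rho (t + 1) = c.rr (t - c.T0 + 1) := by
      unfold rho
      rw [if_neg (by omega), show t + 1 - c.T0 = t - c.T0 + 1 by omega]
    have h0 : c.rho t = c.rr (t - c.T0) := by
      have := c.rho_eq_rr (t - c.T0)
      rw [show c.T0 + (t - c.T0) = t by omega] at this
      exact this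
    rw [h0, h1]
    have := c.rr_delta (t - c.T0)
    rw [show c.T0 + (t - c.T0) = t by omega] at this
    exact this

lemma accepts : c.A.Accepts c.w := by
  refine ⟨c.rho, ⟨c.rho_zero, c.rho_step⟩, ?_⟩
  intro N'
  obtain ⟨m, hm, hF⟩ := c.rr_F_io N'
  refine ⟨c.T0 + m, by omega, ?_⟩
  rw [c.rho_eq_rr m]
  exact hF

end DCtx

end DPAtoNBACtx

/-- If `B` is obtained from the unified construction for `A` and
`w ∈ L(B)`, then `w ∈ L(A)`. -/
theorem dpa_to_nba {Q Alp : Type} [Fintype Q] (A : NBA Q Alp)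
    (hQ0 : A.Q0.Nonempty) (B : TDPA (Slice Q) Alp) (hB : ObtainedUnified A B)
    (w : ℕ → Alp) (hw : B.Accepts w) : A.Accepts w := by
  classical
  obtain ⟨m, hio, hmin, heven⟩ := hw
  obtain ⟨r, hr⟩ := heven
  have hm2 : m = 2 * (m / 2) := by omega
  have hsmall : ∀ v, ∃ Nv, ∀ t, Nv ≤ t → v < m → B.c (B.run w t) (w t) ≠ v := by
    intro v
    by_cases hv : v < m
    · by_contra hcn
      push_neg at hcn
      have hvio : ∀ N, ∃ i, N ≤ i ∧ B.c (B.run w i) (w i) = v := by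
        intro N
        obtain ⟨t, h1, h2, h3⟩ := hcn N
        exact ⟨t, h1, h3⟩
      have := hmin v hvio
      omega
    · exact ⟨0, fun t _ hlt => absurd hlt hv⟩
  choose NV hNV using hsmall
  set N0 := (Finset.range m).sup NV with hN0def
  have hN0 : ∀ t, N0 ≤ t → 2 * (m / 2) ≤ B.c (B.run w t) (w t) := by
    intro t ht
    rw [← hm2]
    by_contra hlt
    push_neg at hlt
    have hNt : NV (B.c (B.run w t) (w t)) ≤ t :=
      le_trans (Finset.le_sup (Finset.mem_range.2 hlt)) ht
    exact hNV (B.c (B.run w t) (w t)) t hNt hlt rfl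
  have hgr : ∀ n, ∃ t, n ≤ t ∧ B.c (B.run w t) (w t) = 2 * (m / 2) := by
    intro n
    obtain ⟨t, h1, h2⟩ := hio n
    exact ⟨t, h1, by rw [← hm2]; exact h2⟩
  exact (DCtx.accepts ⟨A, B, w, m / 2, hQ0, hB, hgr, N0, hN0⟩)
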